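/- For every n ≥ 1, all i, j ∈ {1,…,n} and every integer k ≥ 0, the bimodule S^{(k)}_{i|j}, regarded as a left Λ_n-module, is isomorphic to Λ_n ε_i ⊕ Λ_n ε_{i+1} ⊕ ⋯ ⊕ Λ_n ε_{i+k} (indices modulo n); in particular, S^{(k)}_{i|j} is projective as a left Λ_n-module. -/

import Mathlib

open scoped DirectSum

/-- Right multiplication by `a` as an endomorphism of the left regular module. -/
def rmul (A : Type) [Ring A] (a : A) : A →ₗ[A] A where
  toFun x := x * a
  map_add' x y := add_mul x y a
  map_smul' b x := by simp [smul_eq_mul, mul_assoc]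

/-- `S^{(k)}_{i|j}`, regarded as a left `Λ_n`-module, is isomorphic to
`Λ_n ε_i ⊕ Λ_n ε_{i+1} ⊕ ⋯ ⊕ Λ_n ε_{i+k}` (indices modulo `n`); in particular it is
projective as a left `Λ_n`-module.

Here `Λ_n` is formalized as any `𝕜`-algebra `A` with basis `{ε_a} ∪ {α_a}` (indexed by
`ZMod n`) subject to the structure constants of the radical square zero cyclic Nakayama
algebra, and `S^{(k)}_{i|j}` as any `Λ_n`-`Λ_n`-bimodule `S` with basis
`{s_{i+m|j+m}} ∪ {s_{i+m+1|j+m}}` (`0 ≤ m ≤ k`, encoded by `Sum.inl m`, `Sum.inr m`)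
with the prescribed actions. -/
theorem stmt_1 {𝕜 : Type} [Field 𝕜] (n : ℕ) [NeZero n]
    (A : Type) [Ring A] [Algebra 𝕜 A]
    (eps al : ZMod n → A)
    (bA : Module.Basis (ZMod n ⊕ ZMod n) 𝕜 A)
    (hbAe : ∀ a, bA (Sum.inl a) = eps a)
    (hbAa : ∀ a, bA (Sum.inr a) = al a)
    (hee : ∀ a b, eps a * eps b = if a = b then eps a else 0)
    (hsum : (∑ a, eps a) = 1)
    (hea : ∀ a b, eps a * al b = if a = b + 1 then al b else 0)
    (hae : ∀ a b, al a * eps b = if b = a then al a else 0)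
    (haa : ∀ a b, al a * al b = 0)
    (i j : ZMod n) (k : ℕ)
    (S : Type) [AddCommGroup S] [Module 𝕜 S] [Module A S] [Module Aᵐᵒᵖ S]
    [IsScalarTower 𝕜 A S] [SMulCommClass A Aᵐᵒᵖ S]
    (bS : Module.Basis (Fin (k + 1) ⊕ Fin (k + 1)) 𝕜 S)
    (hSe : ∀ (a : ZMod n) (x : Fin (k + 1) ⊕ Fin (k + 1)),
      eps a • bS x =
        if a = Sum.elim (fun m : Fin (k + 1) => i + (m : ℕ)) (fun m : Fin (k + 1) => i + (m : ℕ) + 1) x then bS x else 0)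
    (hSa : ∀ (a : ZMod n) (m : Fin (k + 1)),
      al a • bS (Sum.inl m) = if a = i + (m : ℕ) then bS (Sum.inr m) else 0)
    (hSa' : ∀ (a : ZMod n) (m : Fin (k + 1)), al a • bS (Sum.inr m) = 0)
    (hSre : ∀ (a : ZMod n) (x : Fin (k + 1) ⊕ Fin (k + 1)),
      MulOpposite.op (eps a) • bS x =
        if a = Sum.elim (fun m : Fin (k + 1) => j + (m : ℕ)) (fun m : Fin (k + 1) => j + (m : ℕ)) x then bS x else 0)
    (hSra : ∀ (a : ZMod n) (m : Fin (k + 1)),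
      MulOpposite.op (al a) • bS (Sum.inl m) =
        if h : (m : ℕ) ≠ 0 ∧ a = j + (m : ℕ) - 1 then
          bS (Sum.inr ⟨(m : ℕ) - 1, by have := m.isLt; omega⟩) else 0)
    (hSra' : ∀ (a : ZMod n) (m : Fin (k + 1)),
      MulOpposite.op (al a) • bS (Sum.inr m) = 0) :
    Nonempty (S ≃ₗ[A] ⨁ m : Fin (k + 1), ↥(LinearMap.range (rmul A (eps (i + (m : ℕ)))))) ∧
      Module.Projective A S := by
    classical
  have rmul_apply : ∀ (a x : A), rmul A a x = x * a := fun _ _ => rfl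
  have he_mem : ∀ m : Fin (k+1), eps (i + (m:ℕ)) ∈ LinearMap.range (rmul A (eps (i + (m:ℕ)))) :=
    fun m => ⟨eps (i + (m:ℕ)), by simp [rmul_apply, hee]⟩
  have ha_mem : ∀ m : Fin (k+1), al (i + (m:ℕ)) ∈ LinearMap.range (rmul A (eps (i + (m:ℕ)))) :=
    fun m => ⟨al (i + (m:ℕ)), by simp [rmul_apply, hae]⟩
  -- the forward A-linear map
  set g : (⨁ m : Fin (k + 1), ↥(LinearMap.range (rmul A (eps (i + (m : ℕ)))))) →ₗ[A] S :=
    DirectSum.toModule A _ S (fun m =>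
      (LinearMap.toSpanSingleton A S (bS (Sum.inl m))).comp
        (LinearMap.range (rmul A (eps (i + (m:ℕ))))).subtype) with hg
  have hge : ∀ m : Fin (k+1),
      g (DirectSum.lof A _ _ m ⟨eps (i + (m:ℕ)), he_mem m⟩) = bS (Sum.inl m) := by
    intro m
    rw [hg, DirectSum.toModule_lof]
    simpa using (hSe (i + (m:ℕ)) (Sum.inl m)).trans (by simp)
  have hga : ∀ m : Fin (k+1),
      g (DirectSum.lof A _ _ m ⟨al (i + (m:ℕ)), ha_mem m⟩) = bS (Sum.inr m) := by
    intro m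
    rw [hg, DirectSum.toModule_lof]
    simpa using (hSa (i + (m:ℕ)) m).trans (by simp)
  -- the 𝕜-linear inverse
  set h : S →ₗ[𝕜] (⨁ m : Fin (k + 1), ↥(LinearMap.range (rmul A (eps (i + (m : ℕ)))))) :=
    bS.constr 𝕜 (Sum.elim
      (fun m => DirectSum.lof 𝕜 _ _ m ⟨eps (i + (m:ℕ)), he_mem m⟩)
      (fun m => DirectSum.lof 𝕜 _ _ m ⟨al (i + (m:ℕ)), ha_mem m⟩)) with hh
  have hlof : ∀ (m : Fin (k+1)) (v : ↥(LinearMap.range (rmul A (eps (i + (m:ℕ)))))),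
      DirectSum.lof A _ (fun m : Fin (k+1) => ↥(LinearMap.range (rmul A (eps (i + (m:ℕ)))))) m v
        = DirectSum.lof 𝕜 _ _ m v := by
    intro m v
    rfl
  -- every element of the range is a 𝕜-combination of eps and al
  have hspan : ∀ (m : Fin (k+1)) (v : A), v ∈ LinearMap.range (rmul A (eps (i + (m:ℕ)))) →
      v ∈ Submodule.span 𝕜 ({eps (i + (m:ℕ)), al (i + (m:ℕ))} : Set A) := by
    intro m v hv
    obtain ⟨x, rfl⟩ := hv
    rw [rmul_apply]
    have hx : x ∈ Submodule.span 𝕜 (Set.range bA) := by rw [bA.span_eq]; trivial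
    induction hx using Submodule.span_induction with
    | mem y hy =>
        obtain ⟨(a | a), rfl⟩ := hy
        · rw [hbAe, hee]
          split_ifs with hcond
          · exact Submodule.subset_span (by rw [hcond]; simp)
          · simp
        · rw [hbAa, hae]
          split_ifs with hcond
          · exact Submodule.subset_span (by rw [← hcond]; simp)
          · simp
    | zero => simp
    | add y z _ _ hy hz => rw [add_mul]; exact Submodule.add_mem _ hy hz
    | smul c y _ hy => rw [smul_mul_assoc]; exact Submodule.smul_mem _ _ hy
  -- g ∘ h = id
  have hgh : ∀ s : S, g (h s) = s := by
    have : (g.restrictScalars 𝕜).comp h = LinearMap.id := by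
      apply bS.ext
      rintro (m | m) <;>
        simp only [LinearMap.comp_apply, LinearMap.restrictScalars_apply, LinearMap.id_apply, hh,
          Module.Basis.constr_basis, Sum.elim_inl, Sum.elim_inr]
      · rw [← hlof, hge]
      · rw [← hlof, hga]
    intro s
    exact DFunLike.congr_fun this s
  -- h ∘ g = id
  have hkey : ∀ (m : Fin (k+1)) (v : ↥(LinearMap.range (rmul A (eps (i + (m:ℕ)))))),
      h (g (DirectSum.lof A _ _ m v)) = DirectSum.lof A _ _ m v := by
    intro m v
    obtain ⟨a, b, hab⟩ := Submodule.mem_span_pair.1 (hspan m v v.2)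
    have hv : v = a • (⟨eps (i + (m:ℕ)), he_mem m⟩ : ↥(LinearMap.range (rmul A (eps (i + (m:ℕ))))))
        + b • ⟨al (i + (m:ℕ)), ha_mem m⟩ := by
      apply Subtype.ext
      push_cast
      exact hab.symm
    set gk : ↥(LinearMap.range (rmul A (eps (i + (m:ℕ))))) →ₗ[𝕜] S :=
      (g.restrictScalars 𝕜).comp (DirectSum.lof 𝕜 (Fin (k+1))
        (fun m : Fin (k+1) => ↥(LinearMap.range (rmul A (eps (i + (m:ℕ)))))) m) with hgk
    have hG : g (DirectSum.lof A _ _ m v) = gk v := by rw [hlof]; rfl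
    have hgk1 : gk ⟨eps (i + (m:ℕ)), he_mem m⟩ = bS (Sum.inl m) := by
      rw [hgk]
      simp only [LinearMap.comp_apply, LinearMap.restrictScalars_apply, ← hlof]
      exact hge m
    have hgk2 : gk ⟨al (i + (m:ℕ)), ha_mem m⟩ = bS (Sum.inr m) := by
      rw [hgk]
      simp only [LinearMap.comp_apply, LinearMap.restrictScalars_apply, ← hlof]
      exact hga m
    rw [hG, hv, map_add, map_smul, map_smul, hgk1, hgk2, map_add, map_smul, map_smul, hh,
      Module.Basis.constr_basis, Module.Basis.constr_basis]
    simp only [Sum.elim_inl, Sum.elim_inr]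
    rw [hlof, ← map_smul, ← map_smul, ← map_add]
  have hhg : ∀ z, h (g z) = z := by
    intro z
    induction z using DirectSum.induction_on with
    | zero => simp
    | of m v => rw [← DirectSum.lof_eq_of A]; exact hkey m v
    | add y z hy hz => rw [map_add, map_add, hy, hz]
  -- the equivalence
  have hbij : Function.Bijective g :=
    ⟨fun x y hxy => by rw [← hhg x, ← hhg y, hxy],
     fun s => ⟨h s, hgh s⟩⟩
  refine ⟨⟨(LinearEquiv.ofBijective g hbij).symm⟩, ?_⟩
  -- projectivity
  haveI hproj : ∀ m : Fin (k+1), Module.Projective A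
      ↥(LinearMap.range (rmul A (eps (i + (m:ℕ))))) := by
    intro m
    refine Module.Projective.of_split (M := A)
      (LinearMap.range (rmul A (eps (i + (m:ℕ))))).subtype
      ((rmul A (eps (i + (m:ℕ)))).rangeRestrict) ?_
    apply LinearMap.ext
    rintro ⟨v, x, rfl⟩
    apply Subtype.ext
    show (rmul A (eps (i + (m:ℕ))) x) * eps (i + (m:ℕ)) = rmul A (eps (i + (m:ℕ))) x
    rw [rmul_apply, mul_assoc, hee]
    simp
  haveI : Module.Projective A (⨁ m : Fin (k + 1), ↥(LinearMap.range (rmul A (eps (i + (m:ℕ)))))) := by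
    have h2 : Module.Projective A
        (Π₀ m : Fin (k + 1), ↥(LinearMap.range (rmul A (eps (i + (m:ℕ)))))) := inferInstance
    exact h2
  exact Module.Projective.of_equiv (LinearEquiv.ofBijective g hbij)
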